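/- Let I ⊆ {1, …, r} be a connected subset containing i, and write ϖ_i − v_{I,I^c}(ϖ_i) = Σ_{m ∈ I} c_m α_m (such an expression exists and is unique since the α_m are linearly independent). Then c_m > 0 for every m ∈ I. -/

import Mathlib

open Finset Module

theorem stmt13_exists_form {V : Type*} [AddCommGroup V] [Module ℚ V] {r : ℕ}
    (b : Basis (Fin r) ℚ V) (coroot : Fin r → Module.Dual ℚ V)
    (hdiag : ∀ i, coroot i (b i) = 2)
    (Φ : Set V) (hΦfin : Φ.Finite) (hΦroot : ∀ i, b i ∈ Φ)
    (hΦrefl : ∀ β ∈ Φ, ∀ i, β - coroot i β • b i ∈ Φ) :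
    ∃ B : V →ₗ[ℚ] V →ₗ[ℚ] ℚ,
      (∀ u, u ≠ 0 → 0 < B u u) ∧
      (∀ k u, B (b k) u = (B (b k) (b k) / 2) * coroot k u) ∧
      (∀ u w, B u w = B w u) := by
  classical
  set σ : Fin r → (V ≃ₗ[ℚ] V) := fun k => Module.reflection (hdiag k) with hσ
  have hσ_apply : ∀ k u, σ k u = u - coroot k u • b k := fun k u =>
    Module.reflection_apply u (hdiag k)
  set G : Subgroup (V ≃ₗ[ℚ] V) := Subgroup.closure (Set.range σ) with hG
  have hstab : ∀ g ∈ G, Set.MapsTo ⇑g Φ Φ ∧ Set.MapsTo ⇑g.symm Φ Φ := by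
    intro g hg
    induction hg using Subgroup.closure_induction with
    | mem x hx =>
      obtain ⟨k, rfl⟩ := hx
      have hm : Set.MapsTo ⇑(σ k) Φ Φ := by
        intro β hβ
        have := hΦrefl β hβ k
        rwa [← hσ_apply] at this
      refine ⟨hm, ?_⟩
      have : (σ k).symm = σ k := Module.reflection_symm (hdiag k)
      rw [this]; exact hm
    | one => constructor <;> (intro β hβ; exact hβ)
    | mul x y hx hy ihx ihy =>
      constructor
      · intro β hβ
        have : (x * y) β = x (y β) := rfl
        rw [this]; exact ihx.1 (ihy.1 hβ)
      · intro β hβ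
        have : (x * y).symm β = y.symm (x.symm β) := rfl
        rw [this]; exact ihy.2 (ihx.2 hβ)
    | inv x hx ihx =>
      refine ⟨ihx.2, ?_⟩
      have : (x⁻¹ : V ≃ₗ[ℚ] V).symm = x := rfl
      rw [this]; exact ihx.1
  haveI := hΦfin.to_subtype
  haveI : Finite G := by
    apply Finite.of_injective
      (fun g : G => (fun j : Fin r => (⟨(g : V ≃ₗ[ℚ] V) (b j),
        (hstab g g.2).1 (hΦroot j)⟩ : Φ)))
    intro g1 g2 h
    apply Subtype.ext
    apply LinearEquiv.toLinearMap_injective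
    apply b.ext
    intro j
    have := congrFun h j
    simpa [Subtype.ext_iff] using this
  letI : Fintype G := Fintype.ofFinite _
  set B : V →ₗ[ℚ] V →ₗ[ℚ] ℚ :=
    ∑ g : G, (b.toDual).compl₁₂ ((g : V ≃ₗ[ℚ] V) : V →ₗ[ℚ] V)
      ((g : V ≃ₗ[ℚ] V) : V →ₗ[ℚ] V) with hB
  have hBapp : ∀ u w, B u w = ∑ g : G, b.toDual ((g : V ≃ₗ[ℚ] V) u) ((g : V ≃ₗ[ℚ] V) w) := by
    intro u w
    rw [hB]
    simp [LinearMap.sum_apply, LinearMap.compl₁₂_apply]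
  -- toDual basics
  have hdot_eq : ∀ z : V, b.toDual z z = ∑ j, b.repr z j * b.repr z j := by
    intro z
    calc b.toDual z z = b.toDual z (∑ j, b.repr z j • b j) := by rw [b.sum_repr]
    _ = ∑ j, b.repr z j * b.toDual z (b j) := by
        rw [map_sum]; simp [smul_eq_mul]
    _ = ∑ j, b.repr z j * b.repr z j := by simp [Basis.toDual_eq_repr]
  have hdot_pos : ∀ z : V, z ≠ 0 → 0 < b.toDual z z := by
    intro z hz
    rw [hdot_eq]
    have : ∃ j, b.repr z j ≠ 0 := by
      by_contra hcon
      push_neg at hcon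
      apply hz
      have : b.repr z = 0 := by ext j; simpa using hcon j
      simpa using congrArg b.repr.symm this
    obtain ⟨j, hj⟩ := this
    apply Finset.sum_pos' (fun k _ => mul_self_nonneg _)
    exact ⟨j, Finset.mem_univ j, mul_self_pos.2 hj⟩
  have hdsymm : ∀ u w : V, b.toDual u w = b.toDual w u := by
    have : (b.toDual).flip = b.toDual := by
      apply b.ext; intro i; apply b.ext; intro j
      simp [Basis.toDual_apply, eq_comm]
    intro u w
    conv_rhs => rw [← this]
    rfl
  have hBsymm : ∀ u w, B u w = B w u := by
    intro u w; rw [hBapp, hBapp]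
    exact Finset.sum_congr rfl fun g _ => hdsymm _ _
  have hBpos : ∀ u, u ≠ 0 → 0 < B u u := by
    intro u hu
    rw [hBapp]
    haveI : Nonempty G := ⟨1⟩
    apply Finset.sum_pos _ Finset.univ_nonempty
    intro g _
    exact hdot_pos _ ((g : V ≃ₗ[ℚ] V).map_ne_zero_iff.2 hu)
  -- invariance
  have hinv : ∀ k (u w : V), B (σ k u) (σ k w) = B u w := by
    intro k u w
    have hmem : σ k ∈ G := Subgroup.subset_closure ⟨k, rfl⟩
    rw [hBapp, hBapp]
    refine Fintype.sum_equiv (Equiv.mulRight (⟨σ k, hmem⟩ : G))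
      (fun g => b.toDual ((g : V ≃ₗ[ℚ] V) (σ k u)) ((g : V ≃ₗ[ℚ] V) (σ k w)))
      (fun g => b.toDual ((g : V ≃ₗ[ℚ] V) u) ((g : V ≃ₗ[ℚ] V) w)) ?_
    intro g
    rfl
  -- key formula
  have hkey : ∀ k (u : V), B (b k) u = (B (b k) (b k) / 2) * coroot k u := by
    intro k u
    set t : ℚ := coroot k u with ht
    set z : V := u - (t / 2) • b k with hz
    have h1 : coroot k z = 0 := by
      rw [hz]
      simp only [map_sub, map_smul, smul_eq_mul, hdiag k, ← ht]
      ring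
    have h2 : σ k z = z := by rw [hσ_apply, h1]; simp
    have h3 : B (b k) z = 0 := by
      have h4 := hinv k (b k) z
      rw [h2] at h4
      have h5 : σ k (b k) = -(b k) := Module.reflection_apply_self (hdiag k)
      rw [h5] at h4
      have h6 : B (-(b k)) z = -(B (b k) z) := by
        rw [map_neg]; simp
      rw [h6] at h4
      linarith
    have : u = z + (t / 2) • b k := by rw [hz]; abel
    rw [this, map_add, map_smul, h3, smul_eq_mul]
    ring
  exact ⟨B, hBpos, hkey, hBsymm⟩

/-- Let `I ⊆ {1, …, r}` be a connected subset (for the Dynkin graph)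
containing `i`, and write `ϖ_i − v_{I,Iᶜ}(ϖ_i) = Σ_{m ∈ I} c_m α_m`.  Then `c_m > 0` for
every `m ∈ I`. -/
theorem stmt_13 {V : Type*} [AddCommGroup V] [Module ℚ V] {r : ℕ}
    (b : Basis (Fin r) ℚ V) (coroot : Fin r → Module.Dual ℚ V)
    (hdiag : ∀ i, coroot i (b i) = 2)
    (hoff : ∀ i j : Fin r, i ≠ j → coroot j (b i) ≤ 0)
    (hint : ∀ i j : Fin r, ∃ n : ℤ, coroot j (b i) = (n : ℚ))
    (Φ : Set V) (hΦfin : Φ.Finite) (hΦroot : ∀ i, b i ∈ Φ)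
    (hΦrefl : ∀ β ∈ Φ, ∀ i, β - coroot i β • b i ∈ Φ)
    (x : Fin r → Module.Dual ℚ V)
    (hx : ∀ i j : Fin r, x j (b i) = if i = j then 1 else 0)
    (ϖ : Fin r → V)
    (hϖ : ∀ i j : Fin r, coroot j (ϖ i) = if i = j then 1 else 0)
    (i : Fin r) (I : Finset (Fin r)) (hiI : i ∈ I)
    (hconn : ((SimpleGraph.fromRel fun a c : Fin r => coroot c (b a) ≠ 0).induce
      (↑I : Set (Fin r))).Connected)
    (v : V) (hvI : ∀ k ∈ I, coroot k v = 0)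
    (hvJ : ∀ j ∈ Iᶜ, x j (ϖ i - v) = 0)
    (c : Fin r → ℚ) (hc : ϖ i - v = ∑ m ∈ I, c m • b m) :
    ∀ m ∈ I, 0 < c m := by
  classical
  obtain ⟨B, hBpos, hkey, hBsymm⟩ := stmt13_exists_form b coroot hdiag Φ hΦfin hΦroot hΦrefl
  have hBkk : ∀ k, 0 < B (b k) (b k) := fun k => hBpos _ (b.ne_zero k)
  have hcoords : ∀ k ∈ I, ∑ m ∈ I, c m * coroot k (b m) = (if i = k then 1 else 0) := by
    intro k hk
    have h1 : coroot k (ϖ i - v) = ∑ m ∈ I, c m * coroot k (b m) := by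
      rw [hc, map_sum]
      simp [smul_eq_mul]
    rw [← h1, map_sub, hvI k hk, hϖ i k, sub_zero]
  -- Step 1 : nonnegativity
  have hnonneg : ∀ m ∈ I, 0 ≤ c m := by
    by_contra hcon
    push_neg at hcon
    obtain ⟨m0, hm0I, hm0⟩ := hcon
    set N : Finset (Fin r) := I.filter (fun m => c m < 0) with hN
    set w : V := ∑ m ∈ N, (-(c m)) • b m with hw
    have hcw : ∀ k ∈ N, coroot k w ≤ 0 := by
      intro k hk
      have hkI : k ∈ I := (Finset.mem_filter.1 hk).1
      have hsplit := Finset.sum_filter_add_sum_filter_not I (fun m => c m < 0)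
        (fun m => c m * coroot k (b m))
      have hrest : ∑ m ∈ I.filter (fun m => ¬ c m < 0), c m * coroot k (b m) ≤ 0 := by
        apply Finset.sum_nonpos
        intro m hm
        obtain ⟨hmI, hmnlt⟩ := Finset.mem_filter.1 hm
        have hmk : m ≠ k := by
          rintro rfl
          exact hmnlt (Finset.mem_filter.1 hk).2
        exact mul_nonpos_of_nonneg_of_nonpos (not_lt.1 hmnlt) (hoff m k hmk)
      have hδ : (0:ℚ) ≤ if i = k then 1 else 0 := by split <;> norm_num
      have hsum := hcoords k hkI
      have hNpart : 0 ≤ ∑ m ∈ N, c m * coroot k (b m) := by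
        rw [hN]
        linarith [hsplit.trans hsum]
      have hwk : coroot k w = ∑ m ∈ N, (-(c m)) * coroot k (b m) := by
        rw [hw, map_sum]; simp [smul_eq_mul]
      rw [hwk]
      have : ∑ m ∈ N, (-(c m)) * coroot k (b m) = -(∑ m ∈ N, c m * coroot k (b m)) := by
        rw [← Finset.sum_neg_distrib]
        exact Finset.sum_congr rfl fun m _ => by ring
      rw [this]
      linarith
    have hBw : B w w ≤ 0 := by
      have h0 : B w = ∑ k ∈ N, (-(c k)) • B (b k) := by
        rw [hw, map_sum]
        exact Finset.sum_congr rfl fun k _ => by rw [map_smul]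
      have h1 : B w w = ∑ k ∈ N, (-(c k)) * B (b k) w :=
        calc B w w = (∑ k ∈ N, (-(c k)) • B (b k)) w := by rw [← h0]
        _ = ∑ k ∈ N, (-(c k)) * B (b k) w := by
            rw [LinearMap.sum_apply]
            exact Finset.sum_congr rfl fun k _ => by
              rw [LinearMap.smul_apply, smul_eq_mul]
      rw [h1]
      apply Finset.sum_nonpos
      intro k hk
      rw [hkey k w]
      have hck : c k < 0 := (Finset.mem_filter.1 hk).2
      have := hBkk k
      have := hcw k hk
      apply mul_nonpos_of_nonneg_of_nonpos (by linarith)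
      apply mul_nonpos_of_nonneg_of_nonpos (by linarith) (hcw k hk)
    have hwne : w ≠ 0 := by
      intro h0
      have := linearIndependent_iff'.1 b.linearIndependent N (fun m => -(c m))
        (by rw [← hw]; exact h0) m0 (Finset.mem_filter.2 ⟨hm0I, hm0⟩)
      have h5 : -c m0 = 0 := this
      linarith
    exact absurd hBw (not_le.2 (hBpos w hwne))
  -- Step 2 : zero propagation
  have hzero : ∀ k ∈ I, c k = 0 → (k ≠ i ∧ ∀ m ∈ I, c m * coroot k (b m) = 0) := by
    intro k hkI hck
    have hterm : ∀ m ∈ I, c m * coroot k (b m) ≤ 0 := by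
      intro m hm
      by_cases hmk : m = k
      · subst hmk; rw [hck]; simp
      · exact mul_nonpos_of_nonneg_of_nonpos (hnonneg m hm) (hoff m k hmk)
    have hsum := hcoords k hkI
    have hsumle : ∑ m ∈ I, c m * coroot k (b m) ≤ 0 := Finset.sum_nonpos hterm
    have hδ : (0:ℚ) ≤ if i = k then 1 else 0 := by split <;> norm_num
    have hδ0 : (if i = k then 1 else 0 : ℚ) = 0 := le_antisymm (hsum ▸ hsumle) hδ
    constructor
    · rintro rfl
      rw [if_pos rfl] at hδ0
      norm_num at hδ0
    · exact (Finset.sum_eq_zero_iff_of_nonpos hterm).1 (by rw [hsum, hδ0])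
  have hiPos : 0 < c i := by
    rcases (hnonneg i hiI).lt_or_eq with h | h
    · exact h
    · exact absurd rfl (hzero i hiI h.symm).1
  -- adjacency propagation
  have hprop : ∀ k ∈ I, ∀ m ∈ I, c k = 0 →
      (coroot m (b k) ≠ 0 ∨ coroot k (b m) ≠ 0) → c m = 0 := by
    intro k hk m hm hck hadj
    by_contra hcm
    have hcmpos : 0 < c m := lt_of_le_of_ne (hnonneg m hm) (Ne.symm hcm)
    have h2 := (hzero k hk hck).2 m hm
    have hmk : coroot k (b m) = 0 := by
      rcases mul_eq_zero.1 h2 with h | h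
      · exact absurd h hcm
      · exact h
    have hkm : coroot m (b k) = 0 := by
      have e1 : B (b m) (b k) = B (b m) (b m) / 2 * coroot m (b k) := hkey m (b k)
      have e2 : B (b k) (b m) = B (b k) (b k) / 2 * coroot k (b m) := hkey k (b m)
      rw [hmk, mul_zero] at e2
      rw [hBsymm (b m) (b k), e2] at e1
      have := hBkk m
      have h3 : B (b m) (b m) / 2 ≠ 0 := by positivity
      exact (mul_eq_zero.1 e1.symm).resolve_left h3
    rcases hadj with h | h
    · exact h hkm
    · exact h hmk
  -- conclude via connectedness
  intro m hmI
  rcases (hnonneg m hmI).lt_or_eq with h | h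
  · exact h
  · exfalso
    have hwalk : ∀ (a b' : ↥(↑I : Set (Fin r)))
        (p : ((SimpleGraph.fromRel fun a c : Fin r => coroot c (b a) ≠ 0).induce
          (↑I : Set (Fin r))).Walk a b'), c a.1 = 0 → c b'.1 = 0 := by
      intro a b' p
      induction p with
      | nil => exact id
      | @cons a' x' b'' hadj p ih =>
        intro h0
        apply ih
        have hadj' := hadj
        simp only [SimpleGraph.comap_adj, Function.Embedding.coe_subtype,
          SimpleGraph.fromRel_adj] at hadj'
        exact hprop a'.1 (Finset.mem_coe.1 a'.2) x'.1 (Finset.mem_coe.1 x'.2) h0 hadj'.2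
    obtain ⟨p⟩ := hconn.preconnected ⟨m, Finset.mem_coe.2 hmI⟩ ⟨i, Finset.mem_coe.2 hiI⟩
    exact absurd (hwalk _ _ p h.symm) (ne_of_gt hiPos)
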